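/- The vector field ν = K·u - 2J·v + I·w annihilates the functions I, J, K, where I = Σ 1/(p_i - p_{i+1}), J = (1/2) Σ (p_i + p_{i+1})/(p_i - p_{i+1}), K = Σ p_i p_{i+1}/(p_i - p_{i+1}), and u = Σ ∂/∂p_i, v = Σ p_i ∂/∂p_i, w = Σ p_i² ∂/∂p_i. Equivalently: u(I)=0, u(J)=I, u(K)=2J; v(I)=-I, v(J)=0, v(K)=K; w(I)=-2J, w(J)=-K, w(K)=0; hence ν(I)=ν(J)=ν(K)=0. -/

import Mathlib

open Finset

/-- `I(P) = Σ 1/(p_i - p_{i+1})`. -/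
noncomputable def Ifun (n : ℕ) [NeZero n] (p : ZMod n → ℂ) : ℂ :=
  ∑ i : ZMod n, 1 / (p i - p (i + 1))

/-- `J(P) = (1/2) Σ (p_i + p_{i+1})/(p_i - p_{i+1})`. -/
noncomputable def Jfun (n : ℕ) [NeZero n] (p : ZMod n → ℂ) : ℂ :=
  (1 / 2) * ∑ i : ZMod n, (p i + p (i + 1)) / (p i - p (i + 1))

/-- `K(P) = Σ p_i p_{i+1}/(p_i - p_{i+1})`. -/
noncomputable def Kfun (n : ℕ) [NeZero n] (p : ZMod n → ℂ) : ℂ :=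
  ∑ i : ZMod n, p i * p (i + 1) / (p i - p (i + 1))

/-- Directional derivative of a function `F` of the polygon at `p` in the
direction of the vector field `w`: `d/dt F(p + t w)|₀`. -/
noncomputable def dirDeriv (n : ℕ) [NeZero n] (F : (ZMod n → ℂ) → ℂ)
    (p w : ZMod n → ℂ) : ℂ :=
  deriv (fun t : ℂ => F (fun i => p i + t * w i)) 0



private lemma hasDerivAt_affine (a x : ℂ) :
    HasDerivAt (fun t : ℂ => a + t * x) x 0 := by
  simpa using ((hasDerivAt_id (0:ℂ)).mul_const x).const_add a

lemma dirDeriv_Ifun (n : ℕ) [NeZero n] (p w : ZMod n → ℂ)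
    (hp : ∀ i : ZMod n, p i ≠ p (i + 1)) :
    dirDeriv n (Ifun n) p w =
      ∑ i : ZMod n, -((w i - w (i+1)) / (p i - p (i+1))^2) := by
  unfold dirDeriv Ifun
  refine HasDerivAt.deriv (HasDerivAt.fun_sum fun i _ => ?_)
  have hsub : HasDerivAt
      (fun t : ℂ => (p i + t * w i) - (p (i+1) + t * w (i+1)))
      (w i - w (i+1)) 0 := (hasDerivAt_affine _ _).sub (hasDerivAt_affine _ _)
  have hne : (p i + (0:ℂ) * w i) - (p (i+1) + 0 * w (i+1)) ≠ 0 := by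
    simpa using sub_ne_zero.mpr (hp i)
  have h := hsub.inv hne
  simp only [zero_mul, add_zero] at h
  simp only [one_div]
  exact h.congr_deriv (by ring)

lemma dirDeriv_Jfun (n : ℕ) [NeZero n] (p w : ZMod n → ℂ)
    (hp : ∀ i : ZMod n, p i ≠ p (i + 1)) :
    dirDeriv n (Jfun n) p w =
      (1/2) * ∑ i : ZMod n,
        ((w i + w (i+1)) * (p i - p (i+1)) - (p i + p (i+1)) * (w i - w (i+1)))
          / (p i - p (i+1))^2 := by
  unfold dirDeriv Jfun
  refine HasDerivAt.deriv (HasDerivAt.const_mul _ (HasDerivAt.fun_sum fun i _ => ?_))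
  have hadd : HasDerivAt
      (fun t : ℂ => (p i + t * w i) + (p (i+1) + t * w (i+1)))
      (w i + w (i+1)) 0 := (hasDerivAt_affine _ _).add (hasDerivAt_affine _ _)
  have hsub : HasDerivAt
      (fun t : ℂ => (p i + t * w i) - (p (i+1) + t * w (i+1)))
      (w i - w (i+1)) 0 := (hasDerivAt_affine _ _).sub (hasDerivAt_affine _ _)
  have hne : (p i + (0:ℂ) * w i) - (p (i+1) + 0 * w (i+1)) ≠ 0 := by
    simpa using sub_ne_zero.mpr (hp i)
  have h := hadd.div hsub hne
  simp only [zero_mul, add_zero] at h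
  exact h

lemma dirDeriv_Kfun (n : ℕ) [NeZero n] (p w : ZMod n → ℂ)
    (hp : ∀ i : ZMod n, p i ≠ p (i + 1)) :
    dirDeriv n (Kfun n) p w =
      ∑ i : ZMod n,
        ((w i * p (i+1) + p i * w (i+1)) * (p i - p (i+1))
            - p i * p (i+1) * (w i - w (i+1)))
          / (p i - p (i+1))^2 := by
  unfold dirDeriv Kfun
  refine HasDerivAt.deriv (HasDerivAt.fun_sum fun i _ => ?_)
  have hmul : HasDerivAt
      (fun t : ℂ => (p i + t * w i) * (p (i+1) + t * w (i+1)))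
      (w i * (p (i+1) + 0 * w (i+1)) + (p i + 0 * w i) * w (i+1)) 0 :=
    (hasDerivAt_affine _ _).mul (hasDerivAt_affine _ _)
  have hsub : HasDerivAt
      (fun t : ℂ => (p i + t * w i) - (p (i+1) + t * w (i+1)))
      (w i - w (i+1)) 0 := (hasDerivAt_affine _ _).sub (hasDerivAt_affine _ _)
  have hne : (p i + (0:ℂ) * w i) - (p (i+1) + 0 * w (i+1)) ≠ 0 := by
    simpa using sub_ne_zero.mpr (hp i)
  have h := hmul.div hsub hne
  simp only [zero_mul, add_zero] at h
  exact h

lemma sum_ext {n : ℕ} [NeZero n] {f g : ZMod n → ℂ} (h : ∀ i, f i = g i) :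
    ∑ i : ZMod n, f i = ∑ i : ZMod n, g i :=
  Finset.sum_congr rfl fun i _ => h i

theorem stmt17 (n : ℕ) [NeZero n] (p : ZMod n → ℂ)
    (hp : ∀ i : ZMod n, p i ≠ p (i + 1)) :
    dirDeriv n (Ifun n) p (fun _ => 1) = 0 ∧
    dirDeriv n (Jfun n) p (fun _ => 1) = Ifun n p ∧
    dirDeriv n (Kfun n) p (fun _ => 1) = 2 * Jfun n p ∧
    dirDeriv n (Ifun n) p p = -(Ifun n p) ∧
    dirDeriv n (Jfun n) p p = 0 ∧
    dirDeriv n (Kfun n) p p = Kfun n p ∧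
    dirDeriv n (Ifun n) p (fun i => (p i) ^ 2) = -(2 * Jfun n p) ∧
    dirDeriv n (Jfun n) p (fun i => (p i) ^ 2) = -(Kfun n p) ∧
    dirDeriv n (Kfun n) p (fun i => (p i) ^ 2) = 0 ∧
    dirDeriv n (Ifun n) p
      (fun i => Kfun n p - 2 * Jfun n p * p i + Ifun n p * (p i) ^ 2) = 0 ∧
    dirDeriv n (Jfun n) p
      (fun i => Kfun n p - 2 * Jfun n p * p i + Ifun n p * (p i) ^ 2) = 0 ∧
    dirDeriv n (Kfun n) p
      (fun i => Kfun n p - 2 * Jfun n p * p i + Ifun n p * (p i) ^ 2) = 0 := by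
  have hd : ∀ i : ZMod n, p i - p (i+1) ≠ 0 := fun i => sub_ne_zero.mpr (hp i)
  refine ⟨?_, ?_, ?_, ?_, ?_, ?_, ?_, ?_, ?_, ?_, ?_, ?_⟩
  · -- u(I) = 0
    rw [dirDeriv_Ifun n p _ hp]
    simp
  · -- u(J) = I
    rw [dirDeriv_Jfun n p _ hp,
      sum_ext (g := fun i => 2 * (1 / (p i - p (i+1))))
        (fun i => by have := hd i; field_simp; try ring),
      ← Finset.mul_sum, Ifun]
    ring
  · -- u(K) = 2J
    rw [dirDeriv_Kfun n p _ hp,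
      sum_ext (g := fun i => (p i + p (i+1)) / (p i - p (i+1)))
        (fun i => by have := hd i; field_simp; try ring),
      Jfun]
    ring
  · -- v(I) = -I
    rw [dirDeriv_Ifun n p _ hp,
      sum_ext (g := fun i => (-1) * (1 / (p i - p (i+1))))
        (fun i => by have := hd i; field_simp; try ring),
      ← Finset.mul_sum, Ifun]
    ring
  · -- v(J) = 0
    rw [dirDeriv_Jfun n p _ hp,
      sum_ext (g := fun _ => (0:ℂ)) (fun i => by have := hd i; field_simp; try ring)]
    simp
  · -- v(K) = K
    rw [dirDeriv_Kfun n p _ hp,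
      sum_ext (g := fun i => p i * p (i+1) / (p i - p (i+1)))
        (fun i => by have := hd i; field_simp; try ring),
      Kfun]
  · -- w(I) = -2J
    rw [dirDeriv_Ifun n p _ hp,
      sum_ext (g := fun i => (-1) * ((p i + p (i+1)) / (p i - p (i+1))))
        (fun i => by have := hd i; field_simp; try ring),
      ← Finset.mul_sum, Jfun]
    ring
  · -- w(J) = -K
    rw [dirDeriv_Jfun n p _ hp,
      sum_ext (g := fun i => (-2) * (p i * p (i+1) / (p i - p (i+1))))
        (fun i => by have := hd i; field_simp; try ring),
      ← Finset.mul_sum, Kfun]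
    ring
  · -- w(K) = 0
    rw [dirDeriv_Kfun n p _ hp,
      sum_ext (g := fun _ => (0:ℂ)) (fun i => by have := hd i; field_simp; try ring)]
    simp
  · -- ν(I) = 0
    rw [dirDeriv_Ifun n p _ hp,
      sum_ext (g := fun i => (2 * Jfun n p) * (1 / (p i - p (i+1)))
          + (-(Ifun n p)) * ((p i + p (i+1)) / (p i - p (i+1))))
        (fun i => by have := hd i; field_simp; try ring),
      Finset.sum_add_distrib, ← Finset.mul_sum, ← Finset.mul_sum, Ifun, Jfun]
    ring
  · -- ν(J) = 0
    rw [dirDeriv_Jfun n p _ hp,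
      sum_ext (g := fun i => (2 * Kfun n p) * (1 / (p i - p (i+1)))
          + (-2 * Ifun n p) * (p i * p (i+1) / (p i - p (i+1))))
        (fun i => by have := hd i; field_simp; try ring),
      Finset.sum_add_distrib, ← Finset.mul_sum, ← Finset.mul_sum, Ifun, Kfun]
    ring
  · -- ν(K) = 0
    rw [dirDeriv_Kfun n p _ hp,
      sum_ext (g := fun i => (Kfun n p) * ((p i + p (i+1)) / (p i - p (i+1)))
          + (-2 * Jfun n p) * (p i * p (i+1) / (p i - p (i+1))))
        (fun i => by have := hd i; field_simp; try ring),
      Finset.sum_add_distrib, ← Finset.mul_sum, ← Finset.mul_sum, Jfun, Kfun]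
    ring
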